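/- The function c(s,t) = (1/6)·min(s,t)^2·(1−max(s,t))^2·(3·max(s,t) − min(s,t) − 2st) on [0,1]^2 satisfies: for every continuous u on [0,1], the function v(t) = ∫_0^1 c(s,t) u(s) ds is four times continuously differentiable with v'''' = u, v(0) = v'(0) = v(1) = v'(1) = 0. -/

import Mathlib

open Set MeasureTheory intervalIntegral

noncomputable def MA (u : ℝ → ℝ) (k : ℕ) (t : ℝ) : ℝ := ∫ s in (0:ℝ)..t, s^k * u s
noncomputable def MB (u : ℝ → ℝ) (k : ℕ) (t : ℝ) : ℝ := ∫ s in t..(1:ℝ), s^k * u s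

noncomputable def g0 (u : ℝ → ℝ) (t : ℝ) : ℝ :=
  ((0 : ℝ) + ((1)/2 : ℝ)*t + ((-1) : ℝ)*t^2 + ((1)/2 : ℝ)*t^3) * MA u 2 t + (((-1)/6 : ℝ) + (0 : ℝ)*t + ((1)/2 : ℝ)*t^2 + ((-1)/3 : ℝ)*t^3) * MA u 3 t + ((0 : ℝ) + (0 : ℝ)*t + (0 : ℝ)*t^2 + ((-1)/6 : ℝ)*t^3) * MB u 0 t + ((0 : ℝ) + (0 : ℝ)*t + ((1)/2 : ℝ)*t^2 + (0 : ℝ)*t^3) * MB u 1 t + ((0 : ℝ) + (0 : ℝ)*t + ((-1) : ℝ)*t^2 + ((1)/2 : ℝ)*t^3) * MB u 2 t + ((0 : ℝ) + (0 : ℝ)*t + ((1)/2 : ℝ)*t^2 + ((-1)/3 : ℝ)*t^3) * MB u 3 t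

noncomputable def g1 (u : ℝ → ℝ) (t : ℝ) : ℝ :=
  (((1)/2 : ℝ) + ((-2) : ℝ)*t + ((3)/2 : ℝ)*t^2 + (0 : ℝ)*t^3) * MA u 2 t + ((0 : ℝ) + (1 : ℝ)*t + ((-1) : ℝ)*t^2 + (0 : ℝ)*t^3) * MA u 3 t + ((0 : ℝ) + (0 : ℝ)*t + ((-1)/2 : ℝ)*t^2 + (0 : ℝ)*t^3) * MB u 0 t + ((0 : ℝ) + (1 : ℝ)*t + (0 : ℝ)*t^2 + (0 : ℝ)*t^3) * MB u 1 t + ((0 : ℝ) + ((-2) : ℝ)*t + ((3)/2 : ℝ)*t^2 + (0 : ℝ)*t^3) * MB u 2 t + ((0 : ℝ) + (1 : ℝ)*t + ((-1) : ℝ)*t^2 + (0 : ℝ)*t^3) * MB u 3 t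

noncomputable def g2 (u : ℝ → ℝ) (t : ℝ) : ℝ :=
  (((-2) : ℝ) + (3 : ℝ)*t + (0 : ℝ)*t^2 + (0 : ℝ)*t^3) * MA u 2 t + ((1 : ℝ) + ((-2) : ℝ)*t + (0 : ℝ)*t^2 + (0 : ℝ)*t^3) * MA u 3 t + ((0 : ℝ) + ((-1) : ℝ)*t + (0 : ℝ)*t^2 + (0 : ℝ)*t^3) * MB u 0 t + ((1 : ℝ) + (0 : ℝ)*t + (0 : ℝ)*t^2 + (0 : ℝ)*t^3) * MB u 1 t + (((-2) : ℝ) + (3 : ℝ)*t + (0 : ℝ)*t^2 + (0 : ℝ)*t^3) * MB u 2 t + ((1 : ℝ) + ((-2) : ℝ)*t + (0 : ℝ)*t^2 + (0 : ℝ)*t^3) * MB u 3 t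

noncomputable def g3 (u : ℝ → ℝ) (t : ℝ) : ℝ :=
  ((3 : ℝ) + (0 : ℝ)*t + (0 : ℝ)*t^2 + (0 : ℝ)*t^3) * MA u 2 t + (((-2) : ℝ) + (0 : ℝ)*t + (0 : ℝ)*t^2 + (0 : ℝ)*t^3) * MA u 3 t + (((-1) : ℝ) + (0 : ℝ)*t + (0 : ℝ)*t^2 + (0 : ℝ)*t^3) * MB u 0 t + ((0 : ℝ) + (0 : ℝ)*t + (0 : ℝ)*t^2 + (0 : ℝ)*t^3) * MB u 1 t + ((3 : ℝ) + (0 : ℝ)*t + (0 : ℝ)*t^2 + (0 : ℝ)*t^3) * MB u 2 t + (((-2) : ℝ) + (0 : ℝ)*t + (0 : ℝ)*t^2 + (0 : ℝ)*t^3) * MB u 3 t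


lemma cubicD (a b c d x : ℝ) :
    HasDerivAt (fun t : ℝ => a + b*t + c*t^2 + d*t^3) (b + 2*c*x + 3*d*x^2) x := by
  have h1 : HasDerivAt (fun t : ℝ => t) 1 x := hasDerivAt_id x
  have h2 := hasDerivAt_pow 2 x
  have h3 := hasDerivAt_pow 3 x
  have := (((hasDerivAt_const x a).add (h1.const_mul b)).add (h2.const_mul c)).add
    (h3.const_mul d)
  refine this.congr_deriv ?_
  push_cast
  ring

variable {u : ℝ → ℝ}

lemma momCont (hu : ContinuousOn u (Icc 0 1)) (k : ℕ) :
    ContinuousOn (fun s : ℝ => s^k * u s) (Icc 0 1) :=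
  (continuous_pow k).continuousOn.mul hu

lemma momInt (hu : ContinuousOn u (Icc 0 1)) (k : ℕ) {a b : ℝ} (ha : a ∈ Icc (0:ℝ) 1)
    (hb : b ∈ Icc (0:ℝ) 1) :
    IntervalIntegrable (fun s : ℝ => s^k * u s) volume a b := by
  refine ((momCont hu k).mono ?_).intervalIntegrable
  exact uIcc_subset_Icc ha hb

lemma hMA (hu : ContinuousOn u (Icc 0 1)) (k : ℕ) {t : ℝ} (ht : t ∈ Icc (0:ℝ) 1) :
    HasDerivWithinAt (MA u k) (t^k * u t) (Icc 0 1) t := by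
  haveI : Fact (t ∈ Icc (0:ℝ) 1) := ⟨ht⟩
  exact integral_hasDerivWithinAt_right (momInt hu k (by norm_num) ht)
    ((momCont hu k).stronglyMeasurableAtFilter_nhdsWithin measurableSet_Icc t)
    ((momCont hu k) t ht)

lemma hMB (hu : ContinuousOn u (Icc 0 1)) (k : ℕ) {t : ℝ} (ht : t ∈ Icc (0:ℝ) 1) :
    HasDerivWithinAt (MB u k) (-(t^k * u t)) (Icc 0 1) t := by
  haveI : Fact (t ∈ Icc (0:ℝ) 1) := ⟨ht⟩
  exact integral_hasDerivWithinAt_left (momInt hu k ht (by norm_num))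
    ((momCont hu k).stronglyMeasurableAtFilter_nhdsWithin measurableSet_Icc t)
    ((momCont hu k) t ht)


lemma hg0d (hu : ContinuousOn u (Icc 0 1)) {t : ℝ} (ht : t ∈ Icc (0:ℝ) 1) :
    HasDerivWithinAt (g0 u) (g1 u t) (Icc 0 1) t := by
  have h : HasDerivWithinAt (fun t : ℝ => ((0 : ℝ) + ((1)/2 : ℝ)*t + ((-1) : ℝ)*t^2 + ((1)/2 : ℝ)*t^3) * MA u 2 t + (((-1)/6 : ℝ) + (0 : ℝ)*t + ((1)/2 : ℝ)*t^2 + ((-1)/3 : ℝ)*t^3) * MA u 3 t + ((0 : ℝ) + (0 : ℝ)*t + (0 : ℝ)*t^2 + ((-1)/6 : ℝ)*t^3) * MB u 0 t + ((0 : ℝ) + (0 : ℝ)*t + ((1)/2 : ℝ)*t^2 + (0 : ℝ)*t^3) * MB u 1 t + ((0 : ℝ) + (0 : ℝ)*t + ((-1) : ℝ)*t^2 + ((1)/2 : ℝ)*t^3) * MB u 2 t + ((0 : ℝ) + (0 : ℝ)*t + ((1)/2 : ℝ)*t^2 + ((-1)/3 : ℝ)*t^3) * MB u 3 t)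
      (((((1)/2 : ℝ) + 2*((-1) : ℝ)*t + 3*((1)/2 : ℝ)*t^2) * MA u 2 t + ((0 : ℝ) + ((1)/2 : ℝ)*t + ((-1) : ℝ)*t^2 + ((1)/2 : ℝ)*t^3) * (t^2 * u t)) + (((0 : ℝ) + 2*((1)/2 : ℝ)*t + 3*((-1)/3 : ℝ)*t^2) * MA u 3 t + (((-1)/6 : ℝ) + (0 : ℝ)*t + ((1)/2 : ℝ)*t^2 + ((-1)/3 : ℝ)*t^3) * (t^3 * u t)) + (((0 : ℝ) + 2*(0 : ℝ)*t + 3*((-1)/6 : ℝ)*t^2) * MB u 0 t + ((0 : ℝ) + (0 : ℝ)*t + (0 : ℝ)*t^2 + ((-1)/6 : ℝ)*t^3) * (-(t^0 * u t))) + (((0 : ℝ) + 2*((1)/2 : ℝ)*t + 3*(0 : ℝ)*t^2) * MB u 1 t + ((0 : ℝ) + (0 : ℝ)*t + ((1)/2 : ℝ)*t^2 + (0 : ℝ)*t^3) * (-(t^1 * u t))) + (((0 : ℝ) + 2*((-1) : ℝ)*t + 3*((1)/2 : ℝ)*t^2) * MB u 2 t + ((0 : ℝ) + (0 : ℝ)*t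 + ((-1) : ℝ)*t^2 + ((1)/2 : ℝ)*t^3) * (-(t^2 * u t))) + (((0 : ℝ) + 2*((1)/2 : ℝ)*t + 3*((-1)/3 : ℝ)*t^2) * MB u 3 t + ((0 : ℝ) + (0 : ℝ)*t + ((1)/2 : ℝ)*t^2 + ((-1)/3 : ℝ)*t^3) * (-(t^3 * u t)))) (Icc 0 1) t := by
    exact ((((((cubicD _ _ _ _ t).hasDerivWithinAt.mul (hMA hu 2 ht)).add
      ((cubicD _ _ _ _ t).hasDerivWithinAt.mul (hMA hu 3 ht))).add
      ((cubicD _ _ _ _ t).hasDerivWithinAt.mul (hMB hu 0 ht))).add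
      ((cubicD _ _ _ _ t).hasDerivWithinAt.mul (hMB hu 1 ht))).add
      ((cubicD _ _ _ _ t).hasDerivWithinAt.mul (hMB hu 2 ht))).add
      ((cubicD _ _ _ _ t).hasDerivWithinAt.mul (hMB hu 3 ht))
  have heq : (((((1)/2 : ℝ) + 2*((-1) : ℝ)*t + 3*((1)/2 : ℝ)*t^2) * MA u 2 t + ((0 : ℝ) + ((1)/2 : ℝ)*t + ((-1) : ℝ)*t^2 + ((1)/2 : ℝ)*t^3) * (t^2 * u t)) + (((0 : ℝ) + 2*((1)/2 : ℝ)*t + 3*((-1)/3 : ℝ)*t^2) * MA u 3 t + (((-1)/6 : ℝ) + (0 : ℝ)*t + ((1)/2 : ℝ)*t^2 + ((-1)/3 : ℝ)*t^3) * (t^3 * u t)) + (((0 : ℝ) + 2*(0 : ℝ)*t + 3*((-1)/6 : ℝ)*t^2) * MB u 0 t + ((0 : ℝ) + (0 : ℝ)*t + (0 : ℝ)*t^2 + ((-1)/6 : ℝ)*t^3) * (-(t^0 * u t))) + (((0 : ℝ) + 2*((1)/2 : ℝ)*t + 3*(0 : ℝ)*t^2) * MB u 1 t + ((0 : ℝ)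 + (0 : ℝ)*t + ((1)/2 : ℝ)*t^2 + (0 : ℝ)*t^3) * (-(t^1 * u t))) + (((0 : ℝ) + 2*((-1) : ℝ)*t + 3*((1)/2 : ℝ)*t^2) * MB u 2 t + ((0 : ℝ) + (0 : ℝ)*t + ((-1) : ℝ)*t^2 + ((1)/2 : ℝ)*t^3) * (-(t^2 * u t))) + (((0 : ℝ) + 2*((1)/2 : ℝ)*t + 3*((-1)/3 : ℝ)*t^2) * MB u 3 t + ((0 : ℝ) + (0 : ℝ)*t + ((1)/2 : ℝ)*t^2 + ((-1)/3 : ℝ)*t^3) * (-(t^3 * u t)))) = g1 u t := by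
    simp only [g1]; ring
  exact heq ▸ h


lemma hg1d (hu : ContinuousOn u (Icc 0 1)) {t : ℝ} (ht : t ∈ Icc (0:ℝ) 1) :
    HasDerivWithinAt (g1 u) (g2 u t) (Icc 0 1) t := by
  have h : HasDerivWithinAt (fun t : ℝ => (((1)/2 : ℝ) + ((-2) : ℝ)*t + ((3)/2 : ℝ)*t^2 + (0 : ℝ)*t^3) * MA u 2 t + ((0 : ℝ) + (1 : ℝ)*t + ((-1) : ℝ)*t^2 + (0 : ℝ)*t^3) * MA u 3 t + ((0 : ℝ) + (0 : ℝ)*t + ((-1)/2 : ℝ)*t^2 + (0 : ℝ)*t^3) * MB u 0 t + ((0 : ℝ) + (1 : ℝ)*t + (0 : ℝ)*t^2 + (0 : ℝ)*t^3) * MB u 1 t + ((0 : ℝ) + ((-2) : ℝ)*t + ((3)/2 : ℝ)*t^2 + (0 : ℝ)*t^3) * MB u 2 t + ((0 : ℝ) + (1 : ℝ)*t + ((-1) : ℝ)*t^2 + (0 : ℝ)*t^3) * MB u 3 t)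
      (((((-2) : ℝ) + 2*((3)/2 : ℝ)*t + 3*(0 : ℝ)*t^2) * MA u 2 t + (((1)/2 : ℝ) + ((-2) : ℝ)*t + ((3)/2 : ℝ)*t^2 + (0 : ℝ)*t^3) * (t^2 * u t)) + (((1 : ℝ) + 2*((-1) : ℝ)*t + 3*(0 : ℝ)*t^2) * MA u 3 t + ((0 : ℝ) + (1 : ℝ)*t + ((-1) : ℝ)*t^2 + (0 : ℝ)*t^3) * (t^3 * u t)) + (((0 : ℝ) + 2*((-1)/2 : ℝ)*t + 3*(0 : ℝ)*t^2) * MB u 0 t + ((0 : ℝ) + (0 : ℝ)*t + ((-1)/2 : ℝ)*t^2 + (0 : ℝ)*t^3) * (-(t^0 * u t))) + (((1 : ℝ) + 2*(0 : ℝ)*t + 3*(0 : ℝ)*t^2) * MB u 1 t + ((0 : ℝ) + (1 : ℝ)*t + (0 : ℝ)*t^2 + (0 : ℝ)*t^3) * (-(t^1 * u t))) + ((((-2) : ℝ) + 2*((3)/2 : ℝ)*t + 3*(0 : ℝ)*t^2) * MB u 2 t + ((0 : ℝ) + ((-2) : ℝ)*t + ((3)/2 : ℝ)*t^2 + (0 :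 ℝ)*t^3) * (-(t^2 * u t))) + (((1 : ℝ) + 2*((-1) : ℝ)*t + 3*(0 : ℝ)*t^2) * MB u 3 t + ((0 : ℝ) + (1 : ℝ)*t + ((-1) : ℝ)*t^2 + (0 : ℝ)*t^3) * (-(t^3 * u t)))) (Icc 0 1) t := by
    exact ((((((cubicD _ _ _ _ t).hasDerivWithinAt.mul (hMA hu 2 ht)).add
      ((cubicD _ _ _ _ t).hasDerivWithinAt.mul (hMA hu 3 ht))).add
      ((cubicD _ _ _ _ t).hasDerivWithinAt.mul (hMB hu 0 ht))).add
      ((cubicD _ _ _ _ t).hasDerivWithinAt.mul (hMB hu 1 ht))).add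
      ((cubicD _ _ _ _ t).hasDerivWithinAt.mul (hMB hu 2 ht))).add
      ((cubicD _ _ _ _ t).hasDerivWithinAt.mul (hMB hu 3 ht))
  have heq : (((((-2) : ℝ) + 2*((3)/2 : ℝ)*t + 3*(0 : ℝ)*t^2) * MA u 2 t + (((1)/2 : ℝ) + ((-2) : ℝ)*t + ((3)/2 : ℝ)*t^2 + (0 : ℝ)*t^3) * (t^2 * u t)) + (((1 : ℝ) + 2*((-1) : ℝ)*t + 3*(0 : ℝ)*t^2) * MA u 3 t + ((0 : ℝ) + (1 : ℝ)*t + ((-1) : ℝ)*t^2 + (0 : ℝ)*t^3) * (t^3 * u t)) + (((0 : ℝ) + 2*((-1)/2 : ℝ)*t + 3*(0 : ℝ)*t^2) * MB u 0 t + ((0 : ℝ) + (0 : ℝ)*t + ((-1)/2 : ℝ)*t^2 + (0 : ℝ)*t^3) * (-(t^0 * u t))) + (((1 : ℝ) + 2*(0 : ℝ)*t + 3*(0 : ℝ)*t^2) * MB u 1 t + ((0 : ℝ) + (1 : ℝ)*t + (0 : ℝ)*t^2 + (0 : ℝ)*t^3) * (-(t^1 * u t))) + ((((-2) : ℝ)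 + 2*((3)/2 : ℝ)*t + 3*(0 : ℝ)*t^2) * MB u 2 t + ((0 : ℝ) + ((-2) : ℝ)*t + ((3)/2 : ℝ)*t^2 + (0 : ℝ)*t^3) * (-(t^2 * u t))) + (((1 : ℝ) + 2*((-1) : ℝ)*t + 3*(0 : ℝ)*t^2) * MB u 3 t + ((0 : ℝ) + (1 : ℝ)*t + ((-1) : ℝ)*t^2 + (0 : ℝ)*t^3) * (-(t^3 * u t)))) = g2 u t := by
    simp only [g2]; ring
  exact heq ▸ h


lemma hg2d (hu : ContinuousOn u (Icc 0 1)) {t : ℝ} (ht : t ∈ Icc (0:ℝ) 1) :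
    HasDerivWithinAt (g2 u) (g3 u t) (Icc 0 1) t := by
  have h : HasDerivWithinAt (fun t : ℝ => (((-2) : ℝ) + (3 : ℝ)*t + (0 : ℝ)*t^2 + (0 : ℝ)*t^3) * MA u 2 t + ((1 : ℝ) + ((-2) : ℝ)*t + (0 : ℝ)*t^2 + (0 : ℝ)*t^3) * MA u 3 t + ((0 : ℝ) + ((-1) : ℝ)*t + (0 : ℝ)*t^2 + (0 : ℝ)*t^3) * MB u 0 t + ((1 : ℝ) + (0 : ℝ)*t + (0 : ℝ)*t^2 + (0 : ℝ)*t^3) * MB u 1 t + (((-2) : ℝ) + (3 : ℝ)*t + (0 : ℝ)*t^2 + (0 : ℝ)*t^3) * MB u 2 t + ((1 : ℝ) + ((-2) : ℝ)*t + (0 : ℝ)*t^2 + (0 : ℝ)*t^3) * MB u 3 t)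
      ((((3 : ℝ) + 2*(0 : ℝ)*t + 3*(0 : ℝ)*t^2) * MA u 2 t + (((-2) : ℝ) + (3 : ℝ)*t + (0 : ℝ)*t^2 + (0 : ℝ)*t^3) * (t^2 * u t)) + ((((-2) : ℝ) + 2*(0 : ℝ)*t + 3*(0 : ℝ)*t^2) * MA u 3 t + ((1 : ℝ) + ((-2) : ℝ)*t + (0 : ℝ)*t^2 + (0 : ℝ)*t^3) * (t^3 * u t)) + ((((-1) : ℝ) + 2*(0 : ℝ)*t + 3*(0 : ℝ)*t^2) * MB u 0 t + ((0 : ℝ) + ((-1) : ℝ)*t + (0 : ℝ)*t^2 + (0 : ℝ)*t^3) * (-(t^0 * u t))) + (((0 : ℝ) + 2*(0 : ℝ)*t + 3*(0 : ℝ)*t^2) * MB u 1 t + ((1 : ℝ) + (0 : ℝ)*t + (0 : ℝ)*t^2 + (0 : ℝ)*t^3) * (-(t^1 * u t))) + (((3 : ℝ) + 2*(0 : ℝ)*t + 3*(0 : ℝ)*t^2) * MB u 2 t + (((-2) : ℝ) + (3 : ℝ)*t + (0 : ℝ)*t^2 + (0 : ℝ)*t^3) * (-(t^2 * u t))) + ((((-2)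 : ℝ) + 2*(0 : ℝ)*t + 3*(0 : ℝ)*t^2) * MB u 3 t + ((1 : ℝ) + ((-2) : ℝ)*t + (0 : ℝ)*t^2 + (0 : ℝ)*t^3) * (-(t^3 * u t)))) (Icc 0 1) t := by
    exact ((((((cubicD _ _ _ _ t).hasDerivWithinAt.mul (hMA hu 2 ht)).add
      ((cubicD _ _ _ _ t).hasDerivWithinAt.mul (hMA hu 3 ht))).add
      ((cubicD _ _ _ _ t).hasDerivWithinAt.mul (hMB hu 0 ht))).add
      ((cubicD _ _ _ _ t).hasDerivWithinAt.mul (hMB hu 1 ht))).add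
      ((cubicD _ _ _ _ t).hasDerivWithinAt.mul (hMB hu 2 ht))).add
      ((cubicD _ _ _ _ t).hasDerivWithinAt.mul (hMB hu 3 ht))
  have heq : ((((3 : ℝ) + 2*(0 : ℝ)*t + 3*(0 : ℝ)*t^2) * MA u 2 t + (((-2) : ℝ) + (3 : ℝ)*t + (0 : ℝ)*t^2 + (0 : ℝ)*t^3) * (t^2 * u t)) + ((((-2) : ℝ) + 2*(0 : ℝ)*t + 3*(0 : ℝ)*t^2) * MA u 3 t + ((1 : ℝ) + ((-2) : ℝ)*t + (0 : ℝ)*t^2 + (0 : ℝ)*t^3) * (t^3 * u t)) + ((((-1) : ℝ) + 2*(0 : ℝ)*t + 3*(0 : ℝ)*t^2) * MB u 0 t + ((0 : ℝ) + ((-1) : ℝ)*t + (0 : ℝ)*t^2 + (0 : ℝ)*t^3) * (-(t^0 * u t))) + (((0 : ℝ) + 2*(0 : ℝ)*t + 3*(0 : ℝ)*t^2) * MB u 1 t + ((1 : ℝ) + (0 : ℝ)*t + (0 : ℝ)*t^2 + (0 : ℝ)*t^3) * (-(t^1 * u t))) + (((3 : ℝ) + 2*(0 : ℝ)*t + 3*(0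 : ℝ)*t^2) * MB u 2 t + (((-2) : ℝ) + (3 : ℝ)*t + (0 : ℝ)*t^2 + (0 : ℝ)*t^3) * (-(t^2 * u t))) + ((((-2) : ℝ) + 2*(0 : ℝ)*t + 3*(0 : ℝ)*t^2) * MB u 3 t + ((1 : ℝ) + ((-2) : ℝ)*t + (0 : ℝ)*t^2 + (0 : ℝ)*t^3) * (-(t^3 * u t)))) = g3 u t := by
    simp only [g3]; ring
  exact heq ▸ h


lemma hg3d (hu : ContinuousOn u (Icc 0 1)) {t : ℝ} (ht : t ∈ Icc (0:ℝ) 1) :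
    HasDerivWithinAt (g3 u) (u t) (Icc 0 1) t := by
  have h : HasDerivWithinAt (fun t : ℝ => ((3 : ℝ) + (0 : ℝ)*t + (0 : ℝ)*t^2 + (0 : ℝ)*t^3) * MA u 2 t + (((-2) : ℝ) + (0 : ℝ)*t + (0 : ℝ)*t^2 + (0 : ℝ)*t^3) * MA u 3 t + (((-1) : ℝ) + (0 : ℝ)*t + (0 : ℝ)*t^2 + (0 : ℝ)*t^3) * MB u 0 t + ((0 : ℝ) + (0 : ℝ)*t + (0 : ℝ)*t^2 + (0 : ℝ)*t^3) * MB u 1 t + ((3 : ℝ) + (0 : ℝ)*t + (0 : ℝ)*t^2 + (0 : ℝ)*t^3) * MB u 2 t + (((-2) : ℝ) + (0 : ℝ)*t + (0 : ℝ)*t^2 + (0 : ℝ)*t^3) * MB u 3 t)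
      ((((0 : ℝ) + 2*(0 : ℝ)*t + 3*(0 : ℝ)*t^2) * MA u 2 t + ((3 : ℝ) + (0 : ℝ)*t + (0 : ℝ)*t^2 + (0 : ℝ)*t^3) * (t^2 * u t)) + (((0 : ℝ) + 2*(0 : ℝ)*t + 3*(0 : ℝ)*t^2) * MA u 3 t + (((-2) : ℝ) + (0 : ℝ)*t + (0 : ℝ)*t^2 + (0 : ℝ)*t^3) * (t^3 * u t)) + (((0 : ℝ) + 2*(0 : ℝ)*t + 3*(0 : ℝ)*t^2) * MB u 0 t + (((-1) : ℝ) + (0 : ℝ)*t + (0 : ℝ)*t^2 + (0 : ℝ)*t^3) * (-(t^0 * u t))) + (((0 : ℝ) + 2*(0 : ℝ)*t + 3*(0 : ℝ)*t^2) * MB u 1 t + ((0 : ℝ) + (0 : ℝ)*t + (0 : ℝ)*t^2 + (0 : ℝ)*t^3) * (-(t^1 * u t))) + (((0 : ℝ) + 2*(0 : ℝ)*t + 3*(0 : ℝ)*t^2) * MB u 2 t + ((3 : ℝ) + (0 : ℝ)*t + (0 : ℝ)*t^2 + (0 : ℝ)*t^3) * (-(t^2 * u t))) + (((0 : ℝ)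 + 2*(0 : ℝ)*t + 3*(0 : ℝ)*t^2) * MB u 3 t + (((-2) : ℝ) + (0 : ℝ)*t + (0 : ℝ)*t^2 + (0 : ℝ)*t^3) * (-(t^3 * u t)))) (Icc 0 1) t := by
    exact ((((((cubicD _ _ _ _ t).hasDerivWithinAt.mul (hMA hu 2 ht)).add
      ((cubicD _ _ _ _ t).hasDerivWithinAt.mul (hMA hu 3 ht))).add
      ((cubicD _ _ _ _ t).hasDerivWithinAt.mul (hMB hu 0 ht))).add
      ((cubicD _ _ _ _ t).hasDerivWithinAt.mul (hMB hu 1 ht))).add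
      ((cubicD _ _ _ _ t).hasDerivWithinAt.mul (hMB hu 2 ht))).add
      ((cubicD _ _ _ _ t).hasDerivWithinAt.mul (hMB hu 3 ht))
  have heq : ((((0 : ℝ) + 2*(0 : ℝ)*t + 3*(0 : ℝ)*t^2) * MA u 2 t + ((3 : ℝ) + (0 : ℝ)*t + (0 : ℝ)*t^2 + (0 : ℝ)*t^3) * (t^2 * u t)) + (((0 : ℝ) + 2*(0 : ℝ)*t + 3*(0 : ℝ)*t^2) * MA u 3 t + (((-2) : ℝ) + (0 : ℝ)*t + (0 : ℝ)*t^2 + (0 : ℝ)*t^3) * (t^3 * u t)) + (((0 : ℝ) + 2*(0 : ℝ)*t + 3*(0 : ℝ)*t^2) * MB u 0 t + (((-1) : ℝ) + (0 : ℝ)*t + (0 : ℝ)*t^2 + (0 : ℝ)*t^3) * (-(t^0 * u t))) + (((0 : ℝ) + 2*(0 : ℝ)*t + 3*(0 : ℝ)*t^2) * MB u 1 t + ((0 : ℝ) + (0 : ℝ)*t + (0 : ℝ)*t^2 + (0 : ℝ)*t^3) * (-(t^1 * u t))) + (((0 : ℝ) + 2*(0 : ℝ)*t + 3*(0 : ℝ)*t^2)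 * MB u 2 t + ((3 : ℝ) + (0 : ℝ)*t + (0 : ℝ)*t^2 + (0 : ℝ)*t^3) * (-(t^2 * u t))) + (((0 : ℝ) + 2*(0 : ℝ)*t + 3*(0 : ℝ)*t^2) * MB u 3 t + (((-2) : ℝ) + (0 : ℝ)*t + (0 : ℝ)*t^2 + (0 : ℝ)*t^3) * (-(t^3 * u t)))) = u t := by
    ring
  exact heq ▸ h

lemma split (hu : ContinuousOn u (Icc 0 1)) (c : ℝ → ℝ → ℝ)
    (hc : ∀ s t : ℝ, c s t =
      1/6 * (min s t)^2 * (1 - max s t)^2 * (3 * max s t - min s t - 2*s*t))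
    {t : ℝ} (ht : t ∈ Icc (0:ℝ) 1) :
    (∫ s in (0:ℝ)..1, c s t * u s) = g0 u t := by
  obtain ⟨ht0, ht1⟩ := ht
  have hmm : Continuous (fun s : ℝ =>
      1/6 * (min s t)^2 * (1 - max s t)^2 * (3 * max s t - min s t - 2*s*t)) := by
    have h1 : Continuous fun s : ℝ => min s t := continuous_id.min continuous_const
    have h2 : Continuous fun s : ℝ => max s t := continuous_id.max continuous_const
    exact ((continuous_const.mul (h1.pow 2)).mul ((continuous_const.sub h2).pow 2)).mul
      (((continuous_const.mul h2).sub h1).sub ((continuous_const.mul continuous_id).mul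
        continuous_const))
  have hcc : ContinuousOn (fun s => c s t * u s) (Icc 0 1) := by
    refine (hmm.continuousOn.mul hu).congr ?_
    intro s _
    show c s t * u s = _
    rw [hc]; rfl
  have hI1 : IntervalIntegrable (fun s => c s t * u s) volume 0 t :=
    (hcc.mono (uIcc_subset_Icc ⟨le_rfl, zero_le_one⟩ ⟨ht0, ht1⟩)).intervalIntegrable
  have hI2 : IntervalIntegrable (fun s => c s t * u s) volume t 1 :=
    (hcc.mono (uIcc_subset_Icc ⟨ht0, ht1⟩ ⟨zero_le_one, le_rfl⟩)).intervalIntegrable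
  have hL : (∫ s in (0:ℝ)..t, c s t * u s)
      = ((0 : ℝ) + ((1)/2 : ℝ)*t + ((-1) : ℝ)*t^2 + ((1)/2 : ℝ)*t^3) * MA u 2 t + (((-1)/6 : ℝ) + (0 : ℝ)*t + ((1)/2 : ℝ)*t^2 + ((-1)/3 : ℝ)*t^3) * MA u 3 t := by
    have e1 : EqOn (fun s => c s t * u s)
        (fun s => ((0 : ℝ) + ((1)/2 : ℝ)*t + ((-1) : ℝ)*t^2 + ((1)/2 : ℝ)*t^3) * (s^2 * u s) + (((-1)/6 : ℝ) + (0 : ℝ)*t + ((1)/2 : ℝ)*t^2 + ((-1)/3 : ℝ)*t^3) * (s^3 * u s)) (uIcc (0:ℝ) t) := by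
      intro s hs
      rw [uIcc_of_le ht0] at hs
      simp only
      rw [hc, min_eq_left hs.2, max_eq_right hs.2]
      ring
    rw [intervalIntegral.integral_congr e1,
      intervalIntegral.integral_add ((momInt hu 2 ⟨le_rfl, zero_le_one⟩ ⟨ht0, ht1⟩).const_mul _)
        ((momInt hu 3 ⟨le_rfl, zero_le_one⟩ ⟨ht0, ht1⟩).const_mul _),
      intervalIntegral.integral_const_mul, intervalIntegral.integral_const_mul]
    rfl
  have hR : (∫ s in t..(1:ℝ), c s t * u s)
      = ((0 : ℝ) + (0 : ℝ)*t + (0 : ℝ)*t^2 + ((-1)/6 : ℝ)*t^3) * MB u 0 t + ((0 : ℝ) + (0 : ℝ)*t + ((1)/2 : ℝ)*t^2 + (0 : ℝ)*t^3) * MB u 1 t + ((0 : ℝ) + (0 : ℝ)*t + ((-1) : ℝ)*t^2 + ((1)/2 : ℝ)*t^3) * MB u 2 t + ((0 : ℝ) + (0 : ℝ)*t + ((1)/2 : ℝ)*t^2 + ((-1)/3 : ℝ)*t^3) * MB u 3 t := by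
    have e2 : EqOn (fun s => c s t * u s)
        (fun s => ((0 : ℝ) + (0 : ℝ)*t + (0 : ℝ)*t^2 + ((-1)/6 : ℝ)*t^3) * (s^0 * u s) + ((0 : ℝ) + (0 : ℝ)*t + ((1)/2 : ℝ)*t^2 + (0 : ℝ)*t^3) * (s^1 * u s)
          + ((0 : ℝ) + (0 : ℝ)*t + ((-1) : ℝ)*t^2 + ((1)/2 : ℝ)*t^3) * (s^2 * u s) + ((0 : ℝ) + (0 : ℝ)*t + ((1)/2 : ℝ)*t^2 + ((-1)/3 : ℝ)*t^3) * (s^3 * u s)) (uIcc t (1:ℝ)) := by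
      intro s hs
      rw [uIcc_of_le ht1] at hs
      simp only
      rw [hc, min_eq_right hs.1, max_eq_left hs.1]
      ring
    have m0 := momInt hu 0 ⟨ht0, ht1⟩ ⟨zero_le_one, le_rfl⟩
    have m1 := momInt hu 1 ⟨ht0, ht1⟩ ⟨zero_le_one, le_rfl⟩
    have m2 := momInt hu 2 ⟨ht0, ht1⟩ ⟨zero_le_one, le_rfl⟩
    have m3 := momInt hu 3 ⟨ht0, ht1⟩ ⟨zero_le_one, le_rfl⟩
    rw [intervalIntegral.integral_congr e2,
      intervalIntegral.integral_add (((m0.const_mul _).add (m1.const_mul _)).add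
        (m2.const_mul _)) (m3.const_mul _),
      intervalIntegral.integral_add ((m0.const_mul _).add (m1.const_mul _)) (m2.const_mul _),
      intervalIntegral.integral_add (m0.const_mul _) (m1.const_mul _),
      intervalIntegral.integral_const_mul, intervalIntegral.integral_const_mul,
      intervalIntegral.integral_const_mul, intervalIntegral.integral_const_mul]
    rfl
  rw [← intervalIntegral.integral_add_adjacent_intervals hI1 hI2, hL, hR]
  simp only [g0]
  ring

theorem stmt13 (u : ℝ → ℝ) (hu : ContinuousOn u (Set.Icc 0 1))
    (c : ℝ → ℝ → ℝ)
    (hc : ∀ s t : ℝ, c s t =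
      1/6 * (min s t)^2 * (1 - max s t)^2 * (3 * max s t - min s t - 2*s*t))
    (v : ℝ → ℝ) (hv : ∀ t : ℝ, v t = ∫ s in (0:ℝ)..1, c s t * u s) :
    ContDiffOn ℝ 4 v (Set.Icc 0 1) ∧
    (∀ t ∈ Set.Icc (0:ℝ) 1, iteratedDerivWithin 4 v (Set.Icc 0 1) t = u t) ∧
    v 0 = 0 ∧ iteratedDerivWithin 1 v (Set.Icc 0 1) 0 = 0 ∧
    v 1 = 0 ∧ iteratedDerivWithin 1 v (Set.Icc 0 1) 1 = 0 := by
  have U : UniqueDiffOn ℝ (Icc (0:ℝ) 1) := uniqueDiffOn_Icc one_pos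
  have h0 : (0:ℝ) ∈ Icc (0:ℝ) 1 := by norm_num
  have h1 : (1:ℝ) ∈ Icc (0:ℝ) 1 := by norm_num
  have hveq : EqOn v (g0 u) (Icc 0 1) := fun t ht => (hv t).trans (split hu c hc ht)
  have hvd : ∀ t ∈ Icc (0:ℝ) 1, HasDerivWithinAt v (g1 u t) (Icc 0 1) t :=
    fun t ht => (hg0d hu ht).congr hveq (hveq ht)
  have hdw0 : EqOn (derivWithin v (Icc 0 1)) (g1 u) (Icc 0 1) :=
    fun t ht => (hvd t ht).derivWithin (U t ht)
  have hdw1 : EqOn (derivWithin (g1 u) (Icc 0 1)) (g2 u) (Icc 0 1) :=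
    fun t ht => (hg1d hu ht).derivWithin (U t ht)
  have hdw2 : EqOn (derivWithin (g2 u) (Icc 0 1)) (g3 u) (Icc 0 1) :=
    fun t ht => (hg2d hu ht).derivWithin (U t ht)
  have hdw3 : EqOn (derivWithin (g3 u) (Icc 0 1)) u (Icc 0 1) :=
    fun t ht => (hg3d hu ht).derivWithin (U t ht)
  have c1 : ContDiffOn ℝ 1 (g3 u) (Icc 0 1) := by
    rw [show (1 : WithTop ℕ∞) = 0 + 1 from rfl, contDiffOn_succ_iff_derivWithin U]
    refine ⟨fun t ht => (hg3d hu ht).differentiableWithinAt, by simp, ?_⟩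
    rw [contDiffOn_zero]
    exact hu.congr hdw3
  have c2 : ContDiffOn ℝ 2 (g2 u) (Icc 0 1) := by
    rw [show (2 : WithTop ℕ∞) = 1 + 1 from rfl, contDiffOn_succ_iff_derivWithin U]
    exact ⟨fun t ht => (hg2d hu ht).differentiableWithinAt, by simp, c1.congr hdw2⟩
  have c3 : ContDiffOn ℝ 3 (g1 u) (Icc 0 1) := by
    rw [show (3 : WithTop ℕ∞) = 2 + 1 from rfl, contDiffOn_succ_iff_derivWithin U]
    exact ⟨fun t ht => (hg1d hu ht).differentiableWithinAt, by simp, c2.congr hdw1⟩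
  have c4 : ContDiffOn ℝ 4 v (Icc 0 1) := by
    rw [show (4 : WithTop ℕ∞) = 3 + 1 from rfl, contDiffOn_succ_iff_derivWithin U]
    exact ⟨fun t ht => (hvd t ht).differentiableWithinAt, by simp, c3.congr hdw0⟩
  refine ⟨c4, ?_, ?_, ?_, ?_, ?_⟩
  · intro t ht
    rw [show (4:ℕ) = 3+1 from rfl, iteratedDerivWithin_succ',
      iteratedDerivWithin_congr hdw0 ht,
      show (3:ℕ) = 2+1 from rfl, iteratedDerivWithin_succ',
      iteratedDerivWithin_congr hdw1 ht,
      show (2:ℕ) = 1+1 from rfl, iteratedDerivWithin_succ',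
      iteratedDerivWithin_congr hdw2 ht,
      iteratedDerivWithin_one]
    exact hdw3 ht
  · rw [hveq h0]
    norm_num [g0, MA]
  · rw [iteratedDerivWithin_one, hdw0 h0]
    norm_num [g1, MA]
  · rw [hveq h1]
    norm_num [g0, MB]
  · rw [iteratedDerivWithin_one, hdw0 h1]
    norm_num [g1, MB]
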